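/- Under the construction setup with 0 ≤ r ≤ 𝔫, the r² polynomials g^i f^j for 0 ≤ i, j ≤ r−1 are linearly independent over F; moreover, their evaluation vectors on the 𝔫² points of Z_f ⊕ Z_g are linearly independent over F, so the evaluation code of span_F(B_{r²}) on Z_f ⊕ Z_g has dimension exactly r². -/

import Mathlib

open Polynomial
open scoped Classical

/-- The point set `Z_f ⊕ Z_g = {β + γ : β ∈ Z_f, γ ∈ Z_g}`. -/
noncomputable def rootSumSet {F : Type*} [Field F] (f g : F[X]) : Finset F :=
  (f.roots.toFinset ×ˢ g.roots.toFinset).image fun p => p.1 + p.2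

/-- The set `B_{r²} = {g^i f^j : 0 ≤ i, j ≤ r-1}` of polynomials. -/
def Bset {F : Type*} [Field F] (f g : F[X]) (r : ℕ) : Set F[X] :=
  {w | ∃ i j : ℕ, i < r ∧ j < r ∧ w = g ^ i * f ^ j}

/-- The linear evaluation map `F[X] → (S → F)` on a finite set `S` of points. -/
noncomputable def evalOn {F : Type*} [Field F] (S : Finset F) : F[X] →ₗ[F] (↥S → F) :=
  LinearMap.pi fun α => Polynomial.leval (α : F)

/-- A family of coefficients of a polynomial of degree `< r` vanishing on at least
`r` points must be zero. -/
lemma poly_vanish {F : Type*} [Field F] {s : Finset F} {r : ℕ} (hr : r ≤ s.card)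
    (c : Fin r → F) (h : ∀ a ∈ s, ∑ i : Fin r, c i * a ^ (i : ℕ) = 0) :
    ∀ i, c i = 0 := by
  intro i0
  set P : F[X] := ∑ i : Fin r, C (c i) * X ^ (i : ℕ) with hP
  have hev : ∀ a ∈ s, P.eval a = 0 := by
    intro a ha
    simpa [P, eval_finset_sum] using h a ha
  have hdeg : P.natDegree < r := by
    have h1 : P.natDegree ≤ r - 1 := by
      apply natDegree_sum_le_of_forall_le
      intro i _
      exact (natDegree_C_mul_X_pow_le (c i) (i : ℕ)).trans (by omega)
    have := i0.isLt
    omega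
  have hP0 : P = 0 :=
    eq_zero_of_natDegree_lt_card_of_eval_eq_zero' P s hev (hdeg.trans_le hr)
  have hc : P.coeff (i0 : ℕ) = c i0 := by
    rw [hP, finset_sum_coeff]
    rw [Finset.sum_eq_single i0]
    · simp
    · intro b _ hb
      have : (b : ℕ) ≠ (i0 : ℕ) := fun hc => hb (Fin.ext hc)
      simp [coeff_C_mul, coeff_X_pow, Ne.symm this]
    · simp
  rw [← hc, hP0, coeff_zero]

theorem stmt_2 (p e : ℕ) (hp : p.Prime) (he : 0 < e)
    (F : Type*) [Field F] [Fintype F] [CharP F p]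
    (f : F[X])
    (hflin : ∀ m ∈ f.support, ∃ i : ℕ, m = (p ^ e) ^ i)
    (hdeg : 1 < f.natDegree)
    (ha0 : f.coeff 1 ≠ 0) (ha1 : f.coeff 1 ≠ 1)
    (g : F[X]) (hg : g = X - f)
    (hfs : f.Splits) (hgs : g.Splits)
    (r : ℕ) (hrn : r ≤ f.natDegree) :
    LinearIndependent F
      (fun ij : Fin r × Fin r => (g ^ (ij.1 : ℕ) * f ^ (ij.2 : ℕ) : F[X])) ∧
    LinearIndependent F
      (fun ij : Fin r × Fin r =>
        evalOn (rootSumSet f g) (g ^ (ij.1 : ℕ) * f ^ (ij.2 : ℕ))) ∧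
    Module.finrank F
      ↥(Submodule.map (evalOn (rootSumSet f g)) (Submodule.span F (Bset f g r))) = r ^ 2 := by
  haveI : Fact p.Prime := ⟨hp⟩
  have hfne : f ≠ 0 := fun h => by simp [h] at hdeg
  -- f is additive
  have haddf : ∀ a b : F, f.eval (a + b) = f.eval a + f.eval b := by
    intro a b
    rw [eval_eq_sum, eval_eq_sum, eval_eq_sum, Polynomial.sum_def, Polynomial.sum_def,
      Polynomial.sum_def, ← Finset.sum_add_distrib]
    apply Finset.sum_congr rfl
    intro m hm
    obtain ⟨i, hi⟩ := hflin m hm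
    rw [hi, ← pow_mul, add_pow_char_pow, mul_add]
  -- derivative of f
  have hdf : derivative f = C (f.coeff 1) := by
    ext n
    rw [coeff_derivative]
    match n with
    | 0 => simp
    | Nat.succ k =>
      rw [coeff_C, if_neg (Nat.succ_ne_zero k)]
      by_cases hm : (k + 1 + 1) ∈ f.support
      · obtain ⟨i, hi⟩ := hflin _ hm
        have hi0 : i ≠ 0 := by
          intro h
          rw [h, pow_zero] at hi
          omega
        have hdvd : p ∣ k + 1 + 1 := by
          rw [hi, ← pow_mul]
          exact dvd_pow_self p (by positivity)
        have : ((k + 1 + 1 : ℕ) : F) = 0 := (CharP.cast_eq_zero_iff F p _).2 hdvd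
        push_cast at this ⊢
        rw [this, mul_zero]
      · rw [Polynomial.notMem_support_iff.1 hm, zero_mul]
  have hsepf : f.Separable :=
    ⟨0, C (f.coeff 1)⁻¹, by
      rw [hdf, zero_mul, zero_add, ← C_mul, inv_mul_cancel₀ ha0, C_1]⟩
  -- degree of g
  have hdegg : g.natDegree = f.natDegree := by
    rw [hg]
    exact natDegree_sub_eq_right_of_natDegree_lt (by simpa using hdeg)
  have hgne : g ≠ 0 := fun h => by rw [h, natDegree_zero] at hdegg; omega
  -- derivative and separability of g
  have hdg : derivative g = C (1 - f.coeff 1) := by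
    rw [hg, derivative_sub, derivative_X, hdf, C_sub, C_1]
  have hsepg : g.Separable :=
    ⟨0, C (1 - f.coeff 1)⁻¹, by
      rw [hdg, zero_mul, zero_add, ← C_mul,
        inv_mul_cancel₀ (sub_ne_zero.2 (Ne.symm ha1)), C_1]⟩
  -- cardinalities of the root sets
  have hcf : f.roots.toFinset.card = f.natDegree := by
    have h1 := hfs.natDegree_eq_card_roots
    rw [Multiset.toFinset_card_of_nodup (nodup_roots hsepf), ← h1]
  have hcg : g.roots.toFinset.card = f.natDegree := by
    have h1 := hgs.natDegree_eq_card_roots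
    rw [Multiset.toFinset_card_of_nodup (nodup_roots hsepg), ← h1, hdegg]
  -- evaluation at sums of roots
  have hkey : ∀ β ∈ f.roots.toFinset, ∀ γ ∈ g.roots.toFinset, ∀ i j : ℕ,
      (g ^ i * f ^ j).eval (β + γ) = β ^ i * γ ^ j := by
    intro β hβ γ hγ i j
    have hβ0 : f.eval β = 0 := by
      rw [Multiset.mem_toFinset, mem_roots hfne] at hβ; exact hβ
    have hγ0 : g.eval γ = 0 := by
      rw [Multiset.mem_toFinset, mem_roots hgne] at hγ; exact hγ
    have hfγ : f.eval γ = γ := by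
      rw [hg] at hγ0; simp at hγ0; linear_combination -hγ0
    have hgβ : g.eval β = β := by rw [hg]; simp [hβ0]
    have h1 : g.eval (β + γ) = β := by
      rw [hg]
      simp only [eval_sub, eval_X, haddf]
      rw [hβ0, hfγ]; ring
    have h2 : f.eval (β + γ) = γ := by rw [haddf, hβ0, hfγ, zero_add]
    rw [eval_mul, eval_pow, eval_pow, h1, h2]
  -- main linear independence of evaluation vectors
  have li2 : LinearIndependent F
      (fun ij : Fin r × Fin r =>
        evalOn (rootSumSet f g) (g ^ (ij.1 : ℕ) * f ^ (ij.2 : ℕ))) := by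
    rw [Fintype.linearIndependent_iff]
    intro c hc
    have hval : ∀ β ∈ f.roots.toFinset, ∀ γ ∈ g.roots.toFinset,
        ∑ ij : Fin r × Fin r, c ij * (β ^ (ij.1 : ℕ) * γ ^ (ij.2 : ℕ)) = 0 := by
      intro β hβ γ hγ
      have hmem : β + γ ∈ rootSumSet f g :=
        Finset.mem_image.2 ⟨(β, γ), Finset.mem_product.2 ⟨hβ, hγ⟩, rfl⟩
      have h1 := congrFun hc ⟨β + γ, hmem⟩
      simp only [Finset.sum_apply, Pi.smul_apply, Pi.zero_apply, smul_eq_mul,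
        evalOn, LinearMap.pi_apply, leval_apply] at h1
      rw [← h1]
      apply Finset.sum_congr rfl
      intro ij _
      rw [hkey β hβ γ hγ]
    have step1 : ∀ γ ∈ g.roots.toFinset, ∀ i' : Fin r,
        ∑ j' : Fin r, c (i', j') * γ ^ (j' : ℕ) = 0 := by
      intro γ hγ
      apply poly_vanish (hrn.trans_eq hcf.symm)
        (fun i' => ∑ j' : Fin r, c (i', j') * γ ^ (j' : ℕ))
      intro β hβ
      have h1 := hval β hβ γ hγ
      rw [← h1, Fintype.sum_prod_type]
      apply Finset.sum_congr rfl
      intro i' _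
      rw [Finset.sum_mul]
      apply Finset.sum_congr rfl
      intro j' _
      ring
    intro ij
    obtain ⟨i, j⟩ := ij
    exact poly_vanish (hrn.trans_eq hcg.symm) (fun j' => c (i, j'))
      (fun γ hγ => step1 γ hγ i) j
  refine ⟨LinearIndependent.of_comp (evalOn (rootSumSet f g)) li2, li2, ?_⟩
  have hBset : Bset f g r =
      Set.range (fun ij : Fin r × Fin r => (g ^ (ij.1 : ℕ) * f ^ (ij.2 : ℕ) : F[X])) := by
    ext w
    constructor
    · rintro ⟨i, j, hi, hj, rfl⟩
      exact ⟨(⟨i, hi⟩, ⟨j, hj⟩), rfl⟩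
    · rintro ⟨⟨i, j⟩, rfl⟩
      exact ⟨i, j, i.isLt, j.isLt, rfl⟩
  rw [hBset, Submodule.map_span, ← Set.range_comp]
  have := finrank_span_eq_card (R := F) li2
  rw [Fintype.card_prod, Fintype.card_fin] at this
  rw [show ((evalOn (rootSumSet f g)) ∘
      fun ij : Fin r × Fin r => (g ^ (ij.1 : ℕ) * f ^ (ij.2 : ℕ) : F[X])) =
      fun ij : Fin r × Fin r => evalOn (rootSumSet f g) (g ^ (ij.1 : ℕ) * f ^ (ij.2 : ℕ))
    from rfl, this, sq]
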